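/- With N odd, C ⊂ E(k) cyclic of order N, s_O normalized with divisor N·O − C, and s_P := τ_{−P}^* s_O for P ∈ C, the product ∏_{P∈C} s_P is a constant function equal to a root of unity. -/

import Mathlib

/-- An abstract model of the group of points and the function field of an elliptic curve `E`
over `k`, together with divisors, pullbacks along translations and inversion, and the
pushforward (norm) maps `[n]_*` along the multiplication-by-`n` isogenies. -/
structure CurveFn (k : Type) [Field k] where
  /-- the group of points `E(k)` (all points are closed since `k` is algebraically closed) -/
  Pt : Type
  [grp : AddCommGroup Pt]
  /-- the function field `k(E)` -/
  F : Type
  [fld : Field F]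
  [alg : Algebra k F]
  /-- the divisor of a nonzero rational function -/
  div : Fˣ → (Pt →₀ ℤ)
  div_mul : ∀ f g : Fˣ, div (f * g) = div f + div g
  div_degree : ∀ f : Fˣ, (div f).sum (fun _ n => n) = 0
  /-- the inclusion of the constants `k^× ⊆ k(E)^×` -/
  constU : kˣ →* Fˣ
  constU_spec : ∀ a : kˣ, ((constU a : Fˣ) : F) = algebraMap k F (a : k)
  div_constU : ∀ a : kˣ, div (constU a) = 0
  eq_constU_of_div_eq_zero : ∀ f : Fˣ, div f = 0 → ∃ a : kˣ, f = constU a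
  /-- pullback `τ_P^*` along translation by a point `P` -/
  tau : Pt → (F ≃+* F)
  tau_algebraMap : ∀ (P : Pt) (a : k), tau P (algebraMap k F a) = algebraMap k F a
  tau_zero : tau 0 = RingEquiv.refl F
  tau_add : ∀ P Q : Pt, tau (P + Q) = (tau Q).trans (tau P)
  div_tau : ∀ (P : Pt) (f : Fˣ),
    div (Units.map (tau P).toRingHom.toMonoidHom f) = (div f).mapDomain (fun x => x - P)
  /-- the pushforward (norm) `[n]_*` along multiplication by `n` -/
  pushNorm : ℕ → (Fˣ →* Fˣ)
  div_pushNorm : ∀ (n : ℕ) (f : Fˣ),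
    div (pushNorm n f) = (div f).mapDomain (fun P => (n : ℤ) • P)
  pushNorm_constU : ∀ (n : ℕ) (a : kˣ), pushNorm n (constU a) = constU (a ^ (n ^ 2))
  pushNorm_mul_eq : ∀ m n : ℕ, pushNorm (m * n) = (pushNorm m).comp (pushNorm n)
  pushNorm_tau : ∀ (n : ℕ) (P : Pt) (f : Fˣ),
    pushNorm n (Units.map (tau P).toRingHom.toMonoidHom f)
      = Units.map (tau (n • P)).toRingHom.toMonoidHom (pushNorm n f)
  /-- pullback `[-1]^*` along the inversion map of `E` -/
  negPull : F ≃+* F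
  negPull_algebraMap : ∀ a : k, negPull (algebraMap k F a) = algebraMap k F a
  negPull_negPull : ∀ x : F, negPull (negPull x) = x
  div_negPull : ∀ f : Fˣ,
    div (Units.map negPull.toRingHom.toMonoidHom f) = (div f).mapDomain (fun x => -x)
  negPull_tau : ∀ (P : Pt) (x : F), negPull (tau (-P) x) = tau P (negPull x)

attribute [instance] CurveFn.grp CurveFn.fld CurveFn.alg

variable {k : Type} [Field k]

/-- pullback along translation, on units -/
def CurveFn.tauU (X : CurveFn k) (P : X.Pt) : X.Fˣ →* X.Fˣ :=
  Units.map (X.tau P).toRingHom.toMonoidHom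

/-- pullback along inversion, on units -/
def CurveFn.negPullU (X : CurveFn k) : X.Fˣ →* X.Fˣ :=
  Units.map X.negPull.toRingHom.toMonoidHom

/-- `a` is a root of unity. -/
def IsRootOfUnity {M : Type*} [Monoid M] (a : M) : Prop := ∃ n : ℕ, 0 < n ∧ a ^ n = 1

/-- `f ∈ k(E)^×` is *normalized* if `[n]_* f` is a constant root of unity for some `n ≥ 1`. -/
def CurveFn.Normalized (X : CurveFn k) (f : X.Fˣ) : Prop :=
  ∃ n : ℕ, 0 < n ∧ ∃ u : kˣ, IsRootOfUnity u ∧ X.pushNorm n f = X.constU u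

/-- With `N` odd, `C ⊂ E(k)` cyclic of order `N`, `s_O` normalized with divisor
`N·O − C`, and `s_P := τ_{−P}^* s_O` for `P ∈ C`, the product `∏_{P∈C} s_P` is a constant
function equal to a root of unity. -/
theorem product_of_sP_is_root_of_unity
    (k : Type) [Field k] [IsAlgClosed k] (X : CurveFn k)
    (N : ℕ) [NeZero N] (hodd : Odd N) (hchar : (N : k) ≠ 0)
    (ι : ZMod N →+ X.Pt) (hι : Function.Injective ι)
    (s : X.Fˣ) (hs : X.Normalized s)
    (hdiv : X.div s =
      Finsupp.single (0 : X.Pt) (N : ℤ) - ∑ j : ZMod N, Finsupp.single (ι j) (1 : ℤ)) :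
    ∃ u : kˣ, IsRootOfUnity u ∧
      (∏ j : ZMod N, X.tau (-(ι j)) ((s : X.Fˣ) : X.F)) = algebraMap k X.F (u : k) := by

  classical
  -- `div 1 = 0`
  have div_one : X.div 1 = 0 := by
    have h := X.div_mul 1 1
    rw [one_mul] at h
    exact (left_eq_add.mp h)
  -- `div` of a product
  have div_prod : ∀ (f : ZMod N → X.Fˣ),
      X.div (∏ j : ZMod N, f j) = ∑ j : ZMod N, X.div (f j) := by
    intro f
    induction (Finset.univ : Finset (ZMod N)) using Finset.induction with
    | empty => simpa using div_one
    | insert _ _ h ih => rw [Finset.prod_insert h, Finset.sum_insert h, X.div_mul, ih]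
  set g : X.Fˣ := ∏ j : ZMod N, X.tauU (-(ι j)) s with hg
  -- divisor of each translate
  have h1 : ∀ j : ZMod N, X.div (X.tauU (-(ι j)) s)
      = Finsupp.single (ι j) (N : ℤ) - ∑ i : ZMod N, Finsupp.single (ι (i + j)) (1 : ℤ) := by
    intro j
    have := X.div_tau (-(ι j)) s
    rw [show X.tauU (-(ι j)) s = Units.map (X.tau (-(ι j))).toRingHom.toMonoidHom s from rfl,
      this, hdiv]
    rw [show (Finsupp.mapDomain (fun x => x - -(ι j))
        (Finsupp.single (0 : X.Pt) (N : ℤ) - ∑ i : ZMod N, Finsupp.single (ι i) (1 : ℤ)))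
      = (Finsupp.mapDomain.addMonoidHom (fun x => x - -(ι j)))
        (Finsupp.single (0 : X.Pt) (N : ℤ) - ∑ i : ZMod N, Finsupp.single (ι i) (1 : ℤ)) from rfl]
    rw [map_sub, map_sum]
    simp [Finsupp.mapDomain.addMonoidHom_apply, Finsupp.mapDomain_single, sub_neg_eq_add,
      ← map_add]
  -- divisor of g is zero
  have hdg : X.div g = 0 := by
    rw [hg, div_prod]
    have h2 : ∀ j : ZMod N, (∑ i : ZMod N, Finsupp.single (ι (i + j)) (1 : ℤ))
        = ∑ m : ZMod N, Finsupp.single (ι m) (1 : ℤ) := by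
      intro j
      exact Fintype.sum_equiv (Equiv.addRight j) _ _ (fun i => rfl)
    simp only [h1, h2]
    rw [Finset.sum_sub_distrib]
    rw [Finset.sum_const, Finset.card_univ, ZMod.card]
    have h3 : ∀ j : ZMod N, Finsupp.single (ι j) (N : ℤ)
        = N • Finsupp.single (ι j) (1 : ℤ) := by
      intro j
      rw [Finsupp.smul_single, nsmul_eq_mul, mul_one]
    simp only [h3, ← Finset.smul_sum]
    simp
  -- g is constant
  obtain ⟨a, ha⟩ := X.eq_constU_of_div_eq_zero g hdg
  -- constU is injective
  have hCinj : Function.Injective X.constU := by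
    intro x y hxy
    have : ((X.constU x : X.Fˣ) : X.F) = ((X.constU y : X.Fˣ) : X.F) := by rw [hxy]
    rw [X.constU_spec, X.constU_spec] at this
    exact Units.ext ((algebraMap k X.F).injective this)
  -- tauU fixes constants
  have htc : ∀ (P : X.Pt) (b : kˣ), X.tauU P (X.constU b) = X.constU b := by
    intro P b
    apply Units.ext
    show X.tau P ((X.constU b : X.Fˣ) : X.F) = _
    rw [X.constU_spec, X.tau_algebraMap]
  -- a is a root of unity
  obtain ⟨n, hn, u, ⟨m, hm, hum⟩, hpush⟩ := hs
  have hpg : X.pushNorm n g = X.constU (u ^ N) := by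
    rw [hg, map_prod]
    have : ∀ j : ZMod N, X.pushNorm n (X.tauU (-(ι j)) s) = X.constU u := by
      intro j
      rw [show X.tauU (-(ι j)) s = Units.map (X.tau (-(ι j))).toRingHom.toMonoidHom s from rfl,
        X.pushNorm_tau, hpush]
      exact htc _ u
    simp only [this, Finset.prod_const, Finset.card_univ, ZMod.card, ← map_pow]
  have hau : a ^ (n ^ 2) = u ^ N := by
    apply hCinj
    rw [← X.pushNorm_constU, ← ha, hpg]
  have haru : IsRootOfUnity a := by
    refine ⟨n ^ 2 * m, by positivity, ?_⟩
    rw [pow_mul, hau, ← pow_mul, mul_comm, pow_mul, hum, one_pow]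
  refine ⟨a, haru, ?_⟩
  have : ((g : X.Fˣ) : X.F) = algebraMap k X.F (a : k) := by
    rw [ha, X.constU_spec]
  rw [← this, hg]
  rw [show ((∏ j : ZMod N, X.tauU (-(ι j)) s : X.Fˣ) : X.F)
      = ∏ j : ZMod N, ((X.tauU (-(ι j)) s : X.Fˣ) : X.F)
    from map_prod (Units.coeHom X.F) _ _]
  rfl
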